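/- Suppose positive integers x_1,…,x_n satisfy 1/x_1 + ⋯ + 1/x_n = 1, a prime p divides at least one x_i, and α = max_i v_p(x_i) is attained exactly at indices i_1,…,i_s with s ≥ 2, with x_{i_t} = p^α x'_{i_t}, p ∤ x'_{i_t}. Then for any choice of s−1 distinct indices k_1,…,k_{s−1} among i_1,…,i_s, the (s−2)-nd elementary symmetric polynomial σ_{s−2}(x'_{k_1},…,x'_{k_{s−1}}) is not divisible by p. -/

import Mathlib

lemma val_sum_ge {p : ℕ} [Fact p.Prime] {ι : Type*} (s : Finset ι) (f : ι → ℚ) (F : ℤ)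
    (hF : F ≤ 0) (h : ∀ i ∈ s, F ≤ padicValRat p (f i)) :
    F ≤ padicValRat p (∑ i ∈ s, f i) := by
  classical
  induction s using Finset.induction with
  | empty => simpa [padicValRat] using hF
  | @insert a s hnotmem ih =>
      rw [Finset.sum_insert hnotmem]
      by_cases h0 : f a + ∑ i ∈ s, f i = 0
      · rw [h0]; simpa [padicValRat] using hF
      · refine le_trans (le_min (h a (Finset.mem_insert_self a s))
          (ih fun i hi => h i (Finset.mem_insert_of_mem hi)))
          (padicValRat.min_le_padicValRat_add h0)

lemma powersetCard_pred {ι : Type*} [DecidableEq ι] (S : Finset ι) (h1 : 1 ≤ S.card) :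
    S.powersetCard (S.card - 1) = S.image (S.erase ·) := by
  ext t
  simp only [Finset.mem_powersetCard, Finset.mem_image]
  constructor
  · rintro ⟨hts, hc⟩
    have hcS : (S \ t).card = 1 := by rw [Finset.card_sdiff_of_subset hts, hc]; omega
    obtain ⟨i, hi⟩ := Finset.card_eq_one.mp hcS
    have hiS : i ∈ S := (Finset.mem_sdiff.mp (hi ▸ Finset.mem_singleton_self i)).1
    refine ⟨i, hiS, ?_⟩
    rw [Finset.erase_eq, ← hi, Finset.sdiff_sdiff_eq_self hts]
  · rintro ⟨i, hi, rfl⟩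
    exact ⟨Finset.erase_subset _ _, Finset.card_erase_of_mem hi⟩

theorem stmt_5 (n : ℕ) (x : Fin n → ℕ) (hx : ∀ i, 0 < x i)
    (hsum : ∑ i, (1 : ℚ) / x i = 1) (p : ℕ) (hp : p.Prime)
    (hdvd : ∃ i, p ∣ x i)
    (α : ℕ) (hα : α = Finset.univ.sup (fun i => padicValNat p (x i)))
    (S : Finset (Fin n)) (hS : S = Finset.univ.filter (fun i => padicValNat p (x i) = α))
    (hcard : 2 ≤ S.card) :
    ∀ T ∈ S.powersetCard (S.card - 1),
      ¬ (p : ℕ) ∣ ∑ t ∈ T.powersetCard (S.card - 2), ∏ i ∈ t, (x i / p ^ α) := by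
  have hpf : Fact p.Prime := ⟨hp⟩
  intro T hT
  rw [Finset.mem_powersetCard] at hT
  obtain ⟨hTS, hTcard⟩ := hT
  set x' : Fin n → ℕ := fun i => x i / p ^ α with hx'
  have hα1 : 1 ≤ α := by
    obtain ⟨i, hi⟩ := hdvd
    calc 1 ≤ padicValNat p (x i) := one_le_padicValNat_of_dvd (hx i).ne' hi
      _ ≤ α := hα ▸ Finset.le_sup (f := fun i => padicValNat p (x i)) (Finset.mem_univ i)
  have hmemS : ∀ i ∈ S, padicValNat p (x i) = α := by
    intro i hi; rw [hS, Finset.mem_filter] at hi; exact hi.2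
  have hdvdS : ∀ i ∈ S, p ^ α ∣ x i := fun i hi => (hmemS i hi) ▸ pow_padicValNat_dvd
  have hx'pos : ∀ i ∈ S, 0 < x' i := fun i hi =>
    Nat.div_pos (Nat.le_of_dvd (hx i) (hdvdS i hi)) (pow_pos hp.pos α)
  have hx'ndvd : ∀ i ∈ S, ¬ p ∣ x' i := by
    intro i hi h
    have h1 : 1 ≤ padicValNat p (x' i) := one_le_padicValNat_of_dvd (hx'pos i hi).ne' h
    rw [hx', padicValNat.div_pow (hdvdS i hi), hmemS i hi, Nat.sub_self] at h1
    omega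
  have hxeq : ∀ i ∈ S, x i = p ^ α * x' i := fun i hi => (Nat.mul_div_cancel' (hdvdS i hi)).symm
  -- the big esymm over S
  set σS : ℕ := ∑ t ∈ S.powersetCard (S.card - 1), ∏ i ∈ t, x' i with hσS
  -- valuation bound on w = ∑_{i ∈ S} 1/x i
  set w : ℚ := ∑ i ∈ S, (1 : ℚ) / x i with hw
  have hxne : ∀ i : Fin n, ((x i : ℚ)) ≠ 0 := fun i => Nat.cast_ne_zero.mpr (hx i).ne'
  have hwpos : 0 < w := by
    refine Finset.sum_pos (fun i _ => div_pos one_pos (by exact_mod_cast hx i)) ?_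
    exact Finset.card_pos.mp (by omega)
  have hvalx : ∀ i : Fin n, padicValRat p ((1 : ℚ) / x i) = -(padicValNat p (x i) : ℤ) := by
    intro i
    rw [one_div, padicValRat.inv, padicValRat.of_nat]
  have hwval : (1 : ℤ) - α ≤ padicValRat p w := by
    have hsplit : w = 1 - ∑ i ∈ Sᶜ, (1 : ℚ) / x i := by
      have h := Finset.sum_add_sum_compl S (fun i => (1:ℚ)/ x i)
      rw [hsum] at h
      rw [hw]; linarith
    have hu : (1 : ℤ) - α ≤ padicValRat p (∑ i ∈ Sᶜ, (1 : ℚ) / x i) := by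
      refine val_sum_ge _ _ _ (by omega) ?_
      intro i hi
      rw [hvalx i]
      have h1 : padicValNat p (x i) ≤ α := hα ▸ Finset.le_sup (f := fun i => padicValNat p (x i)) (Finset.mem_univ i)
      have h2 : padicValNat p (x i) ≠ α := by
        rw [Finset.mem_compl, hS, Finset.mem_filter] at hi
        exact fun hh => hi ⟨Finset.mem_univ i, hh⟩
      omega
    by_cases hu0 : ∑ i ∈ Sᶜ, (1 : ℚ) / x i = 0
    · rw [hsplit, hu0, sub_zero]
      rw [padicValRat.one]; omega
    · have h0' : (1:ℚ) + -(∑ i ∈ Sᶜ, (1 : ℚ) / x i) ≠ 0 := by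
        rw [← sub_eq_add_neg, ← hsplit]; exact hwpos.ne'
      have hmin := padicValRat.min_le_padicValRat_add (p := p)
        (q := 1) (r := -(∑ i ∈ Sᶜ, (1 : ℚ) / x i)) h0'
      rw [padicValRat.one, padicValRat.neg, ← sub_eq_add_neg] at hmin
      rw [hsplit]
      refine le_trans (le_min ?_ ?_) hmin
      · omega
      · exact hu
  -- σS as a rational
  have hAne : ∀ i ∈ S, ((x' i : ℚ)) ≠ 0 := fun i hi => Nat.cast_ne_zero.mpr (hx'pos i hi).ne'
  have hkey : (σS : ℚ) = ((p : ℚ) ^ α * w) * ∏ i ∈ S, (x' i : ℚ) := by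
    rw [hσS, powersetCard_pred S (by omega), Finset.sum_image ?inj]
    case inj =>
      intro i hi j hj hij
      by_contra hne
      have h1 : i ∈ S.erase j := Finset.mem_erase.mpr ⟨hne, hi⟩
      rw [← show S.erase i = S.erase j from hij] at h1
      exact Finset.notMem_erase i S h1
    rw [hw, Finset.mul_sum, Finset.sum_mul, Nat.cast_sum]
    refine Finset.sum_congr rfl fun i hi => ?_
    have hAi : ((x' i : ℚ)) ≠ 0 := hAne i hi
    have hp0 : ((p : ℚ)) ≠ 0 := Nat.cast_ne_zero.mpr hp.pos.ne'
    rw [Nat.cast_prod, ← Finset.mul_prod_erase S (fun j => (x' j : ℚ)) hi, hxeq i hi]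
    push_cast
    field_simp
  -- positivity and valuation of σS
  have hp0 : ((p : ℚ)) ≠ 0 := Nat.cast_ne_zero.mpr hp.pos.ne'
  have hσSpos : 0 < σS := by
    refine Finset.sum_pos (fun t ht => Finset.prod_pos fun i hi =>
      hx'pos i ((Finset.mem_powersetCard.mp ht).1 hi)) ?_
    exact Finset.powersetCard_nonempty.mpr (Nat.sub_le _ _)
  have hprodpos : 0 < ∏ i ∈ S, x' i := Finset.prod_pos fun i hi => hx'pos i hi
  have hAval : padicValNat p (∏ i ∈ S, x' i) = 0 := by
    refine padicValNat.eq_zero_of_not_dvd ?_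
    rw [hp.prime.dvd_finset_prod_iff]
    rintro ⟨i, hi, hdi⟩
    exact hx'ndvd i hi hdi
  have hvσ : (1:ℤ) ≤ padicValRat p (σS : ℚ) := by
    rw [hkey]
    have h2 : (∏ i ∈ S, (x' i : ℚ)) ≠ 0 := by
      rw [← Nat.cast_prod]; exact Nat.cast_ne_zero.mpr hprodpos.ne'
    rw [padicValRat.mul (mul_ne_zero (pow_ne_zero _ hp0) hwpos.ne') h2,
      padicValRat.mul (pow_ne_zero _ hp0) hwpos.ne']
    have hvp : padicValRat p ((p:ℚ)^α) = α := by
      rw [padicValRat.pow, padicValRat.self hp.one_lt, mul_one]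
    have hvA : padicValRat p (∏ i ∈ S, (x' i:ℚ)) = 0 := by
      rw [← Nat.cast_prod, padicValRat.of_nat, hAval, Int.natCast_zero]
    rw [hvp, hvA]
    omega
  have hpdvdσS : p ∣ σS := by
    refine dvd_of_one_le_padicValNat ?_
    have h := hvσ
    rw [padicValRat.of_nat] at h
    exact_mod_cast h
  -- decompose S = insert j T
  obtain ⟨j, hj⟩ : ∃ j, S \ T = {j} :=
    Finset.card_eq_one.mp (by rw [Finset.card_sdiff_of_subset hTS, hTcard]; omega)
  have hjS : j ∈ S := (Finset.mem_sdiff.mp (hj ▸ Finset.mem_singleton_self j)).1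
  have hjT : j ∉ T := (Finset.mem_sdiff.mp (hj ▸ Finset.mem_singleton_self j)).2
  have hins : insert j T = S := by
    rw [Finset.insert_eq, ← hj, Finset.union_comm]
    exact Finset.union_sdiff_of_subset hTS
  have hdecomp : σS = ∏ i ∈ T, x' i
      + x' j * ∑ t ∈ T.powersetCard (S.card - 2), ∏ i ∈ t, x' i := by
    have hc2 : S.card - 1 = (S.card - 2) + 1 := by omega
    obtain ⟨m, hm⟩ : ∃ m, S.card - 2 = m := ⟨_, rfl⟩
    have hcT : m + 1 = T.card := by omega
    rw [hσS, hc2, hm, ← hins, Finset.powersetCard_succ_insert hjT]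
    rw [Finset.sum_union ?disj]
    case disj =>
      rw [Finset.disjoint_left]
      intro t ht ht'
      obtain ⟨u, hu, rfl⟩ := Finset.mem_image.mp ht'
      exact hjT ((Finset.mem_powersetCard.mp ht).1 (Finset.mem_insert_self j u))
    congr 1
    · rw [Nat.succ_eq_add_one, hcT, Finset.powersetCard_self, Finset.sum_singleton]
    · rw [Finset.sum_image ?inj2, Finset.mul_sum]
      case inj2 =>
        intro u hu v hv huv
        have hju : j ∉ u := fun h => hjT ((Finset.mem_powersetCard.mp hu).1 h)
        have hjv : j ∉ v := fun h => hjT ((Finset.mem_powersetCard.mp hv).1 h)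
        have := congrArg (fun t => Finset.erase t j) huv
        simpa [Finset.erase_insert hju, Finset.erase_insert hjv] using this
      refine Finset.sum_congr rfl fun u hu => ?_
      rw [Finset.prod_insert (fun h => hjT ((Finset.mem_powersetCard.mp hu).1 h))]
  -- conclude
  intro hpT
  have h1 : p ∣ x' j * ∑ t ∈ T.powersetCard (S.card - 2), ∏ i ∈ t, x' i :=
    Dvd.dvd.mul_left hpT _
  have h2 : p ∣ ∏ i ∈ T, x' i := (Nat.dvd_add_iff_left h1).mpr (hdecomp ▸ hpdvdσS)
  obtain ⟨i, hi, hdi⟩ := (hp.prime.dvd_finset_prod_iff _).mp h2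
  exact hx'ndvd i (hTS hi) hdi
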